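/- Let L/F be a finite separable extension with no intermediate subfields, S a subspace with κ_2(S) = dim(S) − 1, and A a 2-atom of S with n = dim(A) > 2. Then dim_F(L) ≡ 2 (mod n − 1). -/

import Mathlib

open Module Submodule

variable {F L : Type*} [Field F] [Field L] [Algebra F L]

/-- The boundary `∂_S X = dim(XS) - dim(X)` (as an integer). -/
noncomputable def deltaS (S X : Submodule F L) : ℤ :=
  (finrank F ↥(X * S) : ℤ) - finrank F ↥X

/-- Membership in the family `𝒳_k`: `k ≤ dim X < ∞` and `dim(XS) + k ≤ dim L`. -/
def InXk (k : ℕ) (S X : Submodule F L) : Prop :=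
  FiniteDimensional F ↥X ∧ k ≤ finrank F ↥X ∧
    ((finrank F ↥(X * S) + k : ℕ) : Cardinal) ≤ Module.rank F L

/-- A `k`-fragment of `S`: an element of `𝒳_k` attaining the minimum `κ_k(S)` of `∂_S`. -/
def IsFragment (k : ℕ) (S X : Submodule F L) : Prop :=
  InXk k S X ∧ ∀ Y : Submodule F L, InXk k S Y → deltaS S X ≤ deltaS S Y

/-- A `k`-atom of `S`: a `k`-fragment of minimum dimension. -/
def IsAtomk (k : ℕ) (S A : Submodule F L) : Prop :=
  IsFragment k S A ∧ ∀ B : Submodule F L, IsFragment k S B → finrank F ↥A ≤ finrank F ↥B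

set_option linter.unusedSectionVars false

namespace Stmt10Aux

variable {F L : Type*} [Field F] [Field L] [Algebra F L]


variable {F L : Type*} [Field F] [Field L] [Algebra F L]

/-- translate of a subspace: `c • X` as `span{c} * X`. -/
noncomputable def tr (c : L) (X : Submodule F L) : Submodule F L := span F {c} * X

lemma mem_tr {c x : L} {X : Submodule F L} : x ∈ tr c X ↔ ∃ z ∈ X, c * z = x :=
  Submodule.mem_span_singleton_mul

lemma tr_mul (c : L) (X S : Submodule F L) : tr c X * S = tr c (X * S) :=
  mul_assoc _ _ _

lemma tr_tr (b c : L) (X : Submodule F L) : tr b (tr c X) = tr (b * c) X := by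
  unfold tr
  rw [← mul_assoc, Submodule.span_mul_span, Set.singleton_mul_singleton]

lemma tr_one (X : Submodule F L) : tr (1 : L) X = X := by
  unfold tr
  rw [← Submodule.one_eq_span, one_mul]

lemma tr_zero (X : Submodule F L) : tr (0 : L) X = ⊥ := by
  unfold tr
  rw [Submodule.span_zero_singleton, bot_mul]

lemma tr_mono (c : L) {X Y : Submodule F L} (h : X ≤ Y) : tr c X ≤ tr c Y :=
  mul_le_mul' le_rfl h

/-- translation as a linear equivalence -/
noncomputable def trEquiv (c : L) (hc : c ≠ 0) : L ≃ₗ[F] L :=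
  (LinearEquiv.smulOfNeZero L L c hc).restrictScalars F

lemma tr_eq_map (c : L) (hc : c ≠ 0) (X : Submodule F L) :
    tr c X = X.map (trEquiv (F := F) c hc : L →ₗ[F] L) := by
  ext x
  rw [mem_tr, Submodule.mem_map]
  simp [trEquiv, smul_eq_mul]

lemma finrank_tr (c : L) (hc : c ≠ 0) (X : Submodule F L) :
    finrank F (tr c X) = finrank F X := by
  rw [tr_eq_map c hc, LinearEquiv.finrank_map_eq]

lemma tr_inf (c : L) (hc : c ≠ 0) (X Y : Submodule F L) :
    tr c (X ⊓ Y) = tr c X ⊓ tr c Y := by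
  rw [tr_eq_map c hc, tr_eq_map c hc, tr_eq_map c hc]
  exact Submodule.map_inf _ (trEquiv (F := F) c hc).injective

lemma mul_mem_tr {c : L} {X : Submodule F L} {z : L} (hz : z ∈ X) : c * z ∈ tr c X :=
  mem_tr.2 ⟨z, hz, rfl⟩

lemma tr_le_mul {c : L} {S : Submodule F L} (hc : c ∈ S) (X : Submodule F L) :
    tr c X ≤ X * S := by
  rw [Submodule.mul_comm]
  exact mul_le_mul' (span_le.2 (Set.singleton_subset_iff.2 hc)) le_rfl

lemma le_mul_of_one_mem {S : Submodule F L} (h1 : (1:L) ∈ S) (X : Submodule F L) :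
    X ≤ X * S := by
  conv_lhs => rw [← tr_one X]
  rw [tr_one]
  have := tr_le_mul (F := F) h1 X
  rwa [tr_one] at this


section FinDim
variable [FiniteDimensional F L]

lemma finrank_le_finrank_mul {T : Submodule F L} (hT : T ≠ ⊥) (X : Submodule F L) :
    finrank F ↥X ≤ finrank F ↥(X * T) := by
  obtain ⟨t, htT, ht0⟩ := Submodule.ne_bot_iff T |>.1 hT
  have h1 : tr t X ≤ X * T := tr_le_mul htT X
  have h2 := finrank_tr (F := F) t ht0 X
  have := Submodule.finrank_mono (M := L) h1
  omega

lemma submod_ineq (S X Y : Submodule F L) :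
    finrank F ↥((X ⊓ Y) * S) + finrank F ↥((X ⊔ Y) * S)
      ≤ finrank F ↥(X * S) + finrank F ↥(Y * S) := by
  have h1 : (X ⊓ Y) * S ≤ (X * S) ⊓ (Y * S) :=
    le_inf (mul_le_mul' inf_le_left le_rfl) (mul_le_mul' inf_le_right le_rfl)
  have h2 : (X ⊔ Y) * S = (X * S) ⊔ (Y * S) := Submodule.sup_mul X Y S
  have h3 := Submodule.finrank_mono (M := L) h1
  have h4 : finrank F ↥((X*S) ⊔ (Y*S)) + finrank F ↥((X*S) ⊓ (Y*S))
      = finrank F ↥(X*S) + finrank F ↥(Y*S) := Submodule.finrank_sup_add_finrank_inf_eq _ _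
  rw [h2]
  omega

omit [FiniteDimensional F L] in
lemma top_mul_of_ne_bot {S : Submodule F L} (hS : S ≠ ⊥) : (⊤ : Submodule F L) * S = ⊤ := by
  obtain ⟨s, hsS, hs0⟩ := Submodule.ne_bot_iff S |>.1 hS
  rw [eq_top_iff]
  intro w _
  have : w = (w * s⁻¹) * s := by field_simp
  rw [this]
  exact Submodule.mul_mem_mul mem_top hsS

lemma exists_not_mem_span_one {X : Submodule F L} (h2 : 2 ≤ finrank F ↥X) :
    ∃ b ∈ X, b ∉ span F {(1:L)} := by
  by_contra h
  push_neg at h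
  have hle : X ≤ span F {(1:L)} := h
  have := Submodule.finrank_mono (M := L) hle
  rw [finrank_span_singleton (one_ne_zero)] at this
  omega

lemma eq_top_of_stable
    (hL : ∀ K : IntermediateField F L, K = ⊥ ∨ K = ⊤)
    {X : Submodule F L} (hX : X ≠ ⊥) {b : L} (hb : b ∉ span F {(1:L)})
    (hstab : tr b X ≤ X) : X = ⊤ := by
  have hbint : IsIntegral F b := Algebra.IsIntegral.isIntegral (R := F) b
  have hKne : (IntermediateField.adjoin F {b} : IntermediateField F L) ≠ ⊥ := by
    intro hbot
    have : b ∈ (⊥ : IntermediateField F L) := hbot ▸ IntermediateField.mem_adjoin_simple_self F b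
    rw [IntermediateField.mem_bot] at this
    obtain ⟨r, hr⟩ := this
    exact hb (Submodule.mem_span_singleton.2 ⟨r, by rw [← hr, Algebra.algebraMap_eq_smul_one]⟩)
  have hKtop : (IntermediateField.adjoin F {b} : IntermediateField F L) = ⊤ :=
    (hL _).resolve_left hKne
  have hadj : Algebra.adjoin F ({b} : Set L) = ⊤ := by
    have h1 := IntermediateField.adjoin_simple_toSubalgebra_of_isAlgebraic hbint.isAlgebraic
    rw [hKtop, IntermediateField.top_toSubalgebra] at h1
    exact h1.symm
  have key : ∀ y : L, y ∈ Algebra.adjoin F ({b} : Set L) → ∀ z ∈ X, y * z ∈ X := by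
    intro y hy
    induction hy using Algebra.adjoin_induction with
    | mem u hu =>
        intro z hz
        rcases Set.mem_singleton_iff.1 hu with rfl
        exact hstab (mul_mem_tr hz)
    | algebraMap r =>
        intro z hz
        rw [Algebra.algebraMap_eq_smul_one, smul_mul_assoc, one_mul]
        exact X.smul_mem r hz
    | add u v hu hv hu' hv' =>
        intro z hz; rw [add_mul]; exact X.add_mem (hu' z hz) (hv' z hz)
    | mul u v hu hv hu' hv' =>
        intro z hz; rw [mul_assoc]; exact hu' _ (hv' z hz)
  obtain ⟨c, hcX, hc0⟩ := Submodule.ne_bot_iff X |>.1 hX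
  rw [eq_top_iff]
  intro w _
  have : w = (w * c⁻¹) * c := by field_simp
  rw [this]
  exact key _ (hadj ▸ Algebra.mem_top) _ hcX

end FinDim



section Orth
variable [FiniteDimensional F L] [Algebra.IsSeparable F L]

noncomputable def orth (W : Submodule F L) : Submodule F L :=
  (Algebra.traceForm F L).orthogonal W

lemma finrank_orth (W : Submodule F L) :
    finrank F ↥W + finrank F ↥(orth W) = finrank F L := by
  have hnd := traceForm_nondegenerate F L
  have hrefl : (Algebra.traceForm F L).IsRefl := (Algebra.traceForm_isSymm (R := F) (S := L)).isRefl
  have := LinearMap.BilinForm.finrank_add_finrank_orthogonal (B := Algebra.traceForm F L) hrefl W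
  rw [LinearMap.BilinForm.orthogonal_top_eq_bot hnd, inf_bot_eq, finrank_bot, add_zero] at this
  exact this

lemma mul_orth_le (X S : Submodule F L) : orth (X * S) * S ≤ orth X := by
  rw [Submodule.mul_le]
  intro u hu s hs
  rw [orth, LinearMap.BilinForm.mem_orthogonal_iff]
  intro v hv
  have h1 : s * v ∈ X * S := Submodule.mul_mem_mul_rev hv hs
  have h2 := (LinearMap.BilinForm.mem_orthogonal_iff).1 hu (s*v) h1
  rw [Algebra.traceForm_apply] at h2 ⊢
  rw [show v * (u * s) = s * v * u by ring]
  exact h2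


end Orth
section Generic
variable [FiniteDimensional F L] [Algebra.IsSeparable F L]

/-- `X ∈ 𝒳₂(T)` (numerical form). -/
def InX2 (T X : Submodule F L) : Prop :=
  2 ≤ finrank F ↥X ∧ finrank F ↥(X * T) + 2 ≤ finrank F L

/-- `X` is a 2-fragment of `T` with `κ₂(T) = k`. -/
def Frag (T : Submodule F L) (k : ℕ) (X : Submodule F L) : Prop :=
  InX2 T X ∧ finrank F ↥(X * T) = finrank F ↥X + k

/-- The data pack: `k = κ₂(T)` is the min of `∂_T` over `𝒳₂(T)`, and `B` is a 2-atom
(minimum-dimension fragment) with `1 ∈ B` and `dim B = q`. -/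
structure Pack (T : Submodule F L) (k q : ℕ) (B : Submodule F L) : Prop where
  hT : T ≠ ⊥
  hmin : ∀ X : Submodule F L, InX2 T X → finrank F ↥X + k ≤ finrank F ↥(X * T)
  hfragB : Frag T k B
  hq : finrank F ↥B = q
  hatom : ∀ V : Submodule F L, Frag T k V → q ≤ finrank F ↥V
  h1B : (1:L) ∈ B

variable {T B : Submodule F L} {k q : ℕ}

lemma Frag.tr {X : Submodule F L} (hX : Frag T k X) {c : L} (hc : c ≠ 0) :
    Frag T k (Stmt10Aux.tr c X) := by
  obtain ⟨⟨h1, h2⟩, h3⟩ := hX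
  have e1 : finrank F ↥(Stmt10Aux.tr c X) = finrank F ↥X := finrank_tr c hc X
  have e2 : finrank F ↥(Stmt10Aux.tr c X * T) = finrank F ↥(X * T) := by
    rw [tr_mul, finrank_tr c hc]
  exact ⟨⟨by omega, by omega⟩, by omega⟩

lemma frag_dual (hmin : ∀ X : Submodule F L, InX2 T X →
      finrank F ↥X + k ≤ finrank F ↥(X * T))
    {X : Submodule F L} (hX : Frag T k X) :
    Frag T k (orth (X * T)) ∧
      finrank F ↥(orth (X * T)) + (finrank F ↥X + k) = finrank F L := by
  obtain ⟨⟨ha2, hup⟩, hXT⟩ := hX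
  have h1 := finrank_orth (F := F) (X * T)
  have h2 := finrank_orth (F := F) X
  have h3 : finrank F ↥(orth (X*T) * T) ≤ finrank F ↥(orth X) :=
    Submodule.finrank_mono (mul_orth_le X T)
  have hin : InX2 T (orth (X * T)) := ⟨by omega, by omega⟩
  have h4 := hmin _ hin
  exact ⟨⟨hin, by omega⟩, by omega⟩

lemma Pack.hq2 (P : Pack T k q B) : 2 ≤ q := P.hq ▸ P.hfragB.1.1

lemma Pack.dL_ge (P : Pack T k q B) : 2 * q + k ≤ finrank F L := by
  obtain ⟨hf, hd⟩ := frag_dual P.hmin P.hfragB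
  have := P.hatom _ hf
  have := P.hq
  omega

lemma Pack.ne_bot (P : Pack T k q B) : B ≠ ⊥ := by
  intro h
  have h0 : finrank F ↥B = 0 := by rw [h]; exact finrank_bot F L
  have := P.hq2; have := P.hq; omega

lemma Pack.core (P : Pack T k q B)
    (hL : ∀ K : IntermediateField F L, K = ⊥ ∨ K = ⊤)
    {x : L} (hx : x ∉ span F {(1:L)}) :
    finrank F ↥(B ⊓ Stmt10Aux.tr x B) ≤ 1 := by
  have hx0 : x ≠ 0 := by rintro rfl; exact hx (zero_mem _)
  have hBq := P.hq
  have hq2 := P.hq2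
  by_contra hcon
  push_neg at hcon
  have hZ2 : 2 ≤ finrank F ↥(B ⊓ Stmt10Aux.tr x B) := hcon
  have e1 : finrank F ↥(Stmt10Aux.tr x B) = q := by rw [finrank_tr x hx0, P.hq]
  have eBT : finrank F ↥(B * T) = q + k := by rw [P.hfragB.2, P.hq]
  have exBT : finrank F ↥(Stmt10Aux.tr x B * T) = q + k := by
    rw [tr_mul, finrank_tr x hx0, eBT]
  have hBT2 : finrank F ↥(B * T) + 2 ≤ finrank F L := P.hfragB.1.2
  have hZTle : finrank F ↥((B ⊓ Stmt10Aux.tr x B) * T) ≤ finrank F ↥(B * T) :=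
    Submodule.finrank_mono (mul_le_mul' inf_le_left le_rfl)
  have hZin : InX2 T (B ⊓ Stmt10Aux.tr x B) := ⟨hZ2, by omega⟩
  have hminZ := P.hmin _ hZin
  have hsupinfT : finrank F ↥((B ⊔ Stmt10Aux.tr x B) * T)
      + finrank F ↥((B * T) ⊓ (Stmt10Aux.tr x B * T))
      = finrank F ↥(B * T) + finrank F ↥(Stmt10Aux.tr x B * T) := by
    rw [Submodule.sup_mul]
    exact Submodule.finrank_sup_add_finrank_inf_eq _ _
  have hinf_ge : finrank F ↥((B ⊓ Stmt10Aux.tr x B) * T)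
      ≤ finrank F ↥((B * T) ⊓ (Stmt10Aux.tr x B * T)) :=
    Submodule.finrank_mono (le_inf (mul_le_mul' inf_le_left le_rfl)
      (mul_le_mul' inf_le_right le_rfl))
  have hdL := P.dL_ge
  have hWT_le : finrank F ↥((B ⊔ Stmt10Aux.tr x B) * T) + 2 ≤ finrank F L := by omega
  have hW2 : 2 ≤ finrank F ↥(B ⊔ Stmt10Aux.tr x B) := by
    have h := Submodule.finrank_mono (M := L) (le_sup_left : B ≤ B ⊔ Stmt10Aux.tr x B)
    have := P.hq2; have := P.hq; omega
  have hminW := P.hmin _ (⟨hW2, hWT_le⟩ : InX2 T (B ⊔ Stmt10Aux.tr x B))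
  have hsubmod := submod_ineq T B (Stmt10Aux.tr x B)
  have hsupinf := Submodule.finrank_sup_add_finrank_inf_eq B (Stmt10Aux.tr x B)
  have hZfrag : Frag T k (B ⊓ Stmt10Aux.tr x B) := ⟨hZin, by omega⟩
  have hqZ := P.hatom _ hZfrag
  have hZB : B ⊓ Stmt10Aux.tr x B = B :=
    Submodule.eq_of_le_of_finrank_le inf_le_left (by rw [P.hq]; omega)
  have hBle : B ≤ Stmt10Aux.tr x B := hZB.symm.le.trans inf_le_right
  have hBeq : B = Stmt10Aux.tr x B :=
    Submodule.eq_of_le_of_finrank_le hBle (by rw [e1, P.hq])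
  have htop : B = ⊤ := eq_top_of_stable hL P.ne_bot hx (le_of_eq hBeq.symm)
  have hfin : finrank F ↥(B * T) = finrank F L := by
    rw [htop, top_mul_of_ne_bot P.hT, finrank_top]
  omega

lemma Pack.master_step (P : Pack T k q B)
    (hL : ∀ K : IntermediateField F L, K = ⊥ ∨ K = ⊤)
    (hcrit : k + 1 = finrank F ↥T)
    {V : Submodule F L} (hV : Frag T k V) :
    (finrank F L = finrank F ↥V + k + q) ∨
      ∃ V', Frag T k V' ∧ finrank F ↥V' + 1 = finrank F ↥V + q := by
  obtain ⟨⟨ha2, haup⟩, hVT⟩ := hV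
  have hBq := P.hq
  have hq2 := P.hq2
  have hBT2 : finrank F ↥(B * T) + 2 ≤ finrank F L := P.hfragB.1.2
  have hc_ex : ∃ c ∈ V, ¬ Stmt10Aux.tr c B ≤ V := by
    by_contra hcon
    push_neg at hcon
    obtain ⟨b, hbB, hb1⟩ := exists_not_mem_span_one (X := B) (by rw [P.hq]; exact P.hq2)
    have hstab : Stmt10Aux.tr b V ≤ V := by
      intro z hz
      obtain ⟨v, hv, hvz⟩ := mem_tr.1 hz
      have hm : v * b ∈ Stmt10Aux.tr v B := mul_mem_tr hbB
      rw [mul_comm v b, hvz] at hm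
      exact hcon v hv hm
    have hVbot : V ≠ ⊥ := by
      intro h
      have h0 : finrank F ↥V = 0 := by rw [h]; exact finrank_bot F L
      omega
    have htop : V = ⊤ := eq_top_of_stable hL hVbot hb1 hstab
    have hfin : finrank F ↥(V * T) = finrank F L := by
      rw [htop, top_mul_of_ne_bot P.hT, finrank_top]
    omega
  obtain ⟨c, hcV, hcB⟩ := hc_ex
  have hc0 : c ≠ 0 := by
    rintro rfl
    exact hcB (by rw [tr_zero]; exact bot_le)
  have hcZ : c ∈ V ⊓ Stmt10Aux.tr c B := by
    refine ⟨hcV, ?_⟩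
    have h := mul_mem_tr (c := c) P.h1B
    rwa [mul_one] at h
  have hspanZ : span F {c} ≤ V ⊓ Stmt10Aux.tr c B :=
    span_le.2 (Set.singleton_subset_iff.2 hcZ)
  have hZ1 : 1 ≤ finrank F ↥(V ⊓ Stmt10Aux.tr c B) := by
    have h := Submodule.finrank_mono (M := L) hspanZ
    rw [finrank_span_singleton hc0] at h
    omega
  have e1 : finrank F ↥(Stmt10Aux.tr c B) = q := by rw [finrank_tr c hc0, P.hq]
  have eBT : finrank F ↥(B * T) = q + k := by rw [P.hfragB.2, P.hq]
  have ecBT : finrank F ↥(Stmt10Aux.tr c B * T) = q + k := by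
    rw [tr_mul, finrank_tr c hc0, eBT]
  have hBT2 : finrank F ↥(B * T) + 2 ≤ finrank F L := P.hfragB.1.2
  have hspanT : finrank F ↥(span F {c} * T) = finrank F ↥T := finrank_tr c hc0 T
  have hZT_ge : k + 1 ≤ finrank F ↥((V ⊓ Stmt10Aux.tr c B) * T) := by
    have hle : span F {c} * T ≤ (V ⊓ Stmt10Aux.tr c B) * T :=
      mul_le_mul' hspanZ le_rfl
    have h := Submodule.finrank_mono (M := L) hle
    omega
  have hdual : finrank F ↥V + k + q ≤ finrank F L := by
    obtain ⟨hf, hd⟩ := frag_dual P.hmin ⟨⟨ha2, haup⟩, hVT⟩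
    have := P.hatom _ hf
    omega
  have hsupinfT : finrank F ↥((V ⊔ Stmt10Aux.tr c B) * T)
      + finrank F ↥((V * T) ⊓ (Stmt10Aux.tr c B * T))
      = finrank F ↥(V * T) + finrank F ↥(Stmt10Aux.tr c B * T) := by
    rw [Submodule.sup_mul]
    exact Submodule.finrank_sup_add_finrank_inf_eq _ _
  have hinf_ge : finrank F ↥((V ⊓ Stmt10Aux.tr c B) * T)
      ≤ finrank F ↥((V * T) ⊓ (Stmt10Aux.tr c B * T)) :=
    Submodule.finrank_mono (le_inf (mul_le_mul' inf_le_left le_rfl)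
      (mul_le_mul' inf_le_right le_rfl))
  have hsubmod := submod_ineq T V (Stmt10Aux.tr c B)
  have hsupinf := Submodule.finrank_sup_add_finrank_inf_eq V (Stmt10Aux.tr c B)
  have hW2 : 2 ≤ finrank F ↥(V ⊔ Stmt10Aux.tr c B) := by
    have h := Submodule.finrank_mono (M := L) (le_sup_left : V ≤ V ⊔ Stmt10Aux.tr c B)
    omega
  by_cases hZ2 : 2 ≤ finrank F ↥(V ⊓ Stmt10Aux.tr c B)
  · exfalso
    have hZTle : finrank F ↥((V ⊓ Stmt10Aux.tr c B) * T)
        ≤ finrank F ↥(Stmt10Aux.tr c B * T) :=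
      Submodule.finrank_mono (mul_le_mul' inf_le_right le_rfl)
    have hZin : InX2 T (V ⊓ Stmt10Aux.tr c B) := ⟨hZ2, by omega⟩
    have hminZ := P.hmin _ hZin
    by_cases hWX : finrank F ↥((V ⊔ Stmt10Aux.tr c B) * T) + 2 ≤ finrank F L
    · have hminW := P.hmin _ (⟨hW2, hWX⟩ : InX2 T (V ⊔ Stmt10Aux.tr c B))
      have hZfrag : Frag T k (V ⊓ Stmt10Aux.tr c B) := ⟨hZin, by omega⟩
      have hqZ := P.hatom _ hZfrag
      have hZeq : V ⊓ Stmt10Aux.tr c B = Stmt10Aux.tr c B :=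
        Submodule.eq_of_le_of_finrank_le inf_le_right (by omega)
      exact hcB (hZeq.symm.le.trans inf_le_left)
    · push_neg at hWX
      omega
  · push_neg at hZ2
    have hZspan : span F {c} = V ⊓ Stmt10Aux.tr c B :=
      Submodule.eq_of_le_of_finrank_le hspanZ
        (by rw [finrank_span_singleton hc0]; omega)
    have hZT_eq : finrank F ↥((V ⊓ Stmt10Aux.tr c B) * T) = k + 1 := by
      rw [← hZspan]
      omega
    by_cases hWX : finrank F ↥((V ⊔ Stmt10Aux.tr c B) * T) + 2 ≤ finrank F L
    · have hminW := P.hmin _ (⟨hW2, hWX⟩ : InX2 T (V ⊔ Stmt10Aux.tr c B))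
      right
      exact ⟨V ⊔ Stmt10Aux.tr c B, ⟨⟨hW2, hWX⟩, by omega⟩, by omega⟩
    · push_neg at hWX
      left
      omega

lemma Pack.master (P : Pack T k q B)
    (hL : ∀ K : IntermediateField F L, K = ⊥ ∨ K = ⊤)
    (hcrit : k + 1 = finrank F ↥T) :
    ∀ fuel (V : Submodule F L), Frag T k V → finrank F L ≤ finrank F ↥V + fuel →
      ∃ m, finrank F L = finrank F ↥V + m * (q - 1) + k + q := by
  intro fuel
  induction fuel with
  | zero =>
      intro V hV hle
      have h1 := hV.1.2
      have h2 := hV.2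
      omega
  | succ fuel ih =>
      intro V hV hle
      rcases P.master_step hL hcrit hV with h | ⟨V', hV', hd⟩
      · exact ⟨0, by omega⟩
      · have hq2 := P.hq2
        obtain ⟨m, hm⟩ := ih V' hV' (by omega)
        refine ⟨m + 1, ?_⟩
        have hmul : (m + 1) * (q - 1) = m * (q - 1) + (q - 1) := by ring
        omega

end Generic

end Stmt10Aux

open Stmt10Aux

lemma inXk_iff [FiniteDimensional F L] {S X : Submodule F L} :
    InXk 2 S X ↔ InX2 S X := by
  unfold InXk InX2
  constructor
  · rintro ⟨-, h2, h3⟩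
    refine ⟨h2, ?_⟩
    rw [← finrank_eq_rank F L] at h3
    exact_mod_cast h3
  · rintro ⟨h2, h3⟩
    refine ⟨inferInstance, h2, ?_⟩
    rw [← finrank_eq_rank F L]
    exact_mod_cast h3

theorem stmt10 [FiniteDimensional F L] [Algebra.IsSeparable F L]
    (hL : ∀ K : IntermediateField F L, K = ⊥ ∨ K = ⊤)
    (S : Submodule F L) (hS : FiniteDimensional F ↥S)
    (hκmin : ∀ X : Submodule F L, InXk 2 S X → (finrank F ↥S : ℤ) - 1 ≤ deltaS S X)
    (hκex : ∃ X : Submodule F L, InXk 2 S X ∧ deltaS S X = (finrank F ↥S : ℤ) - 1)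
    (A : Submodule F L) (hA : IsAtomk 2 S A)
    (n : ℕ) (hn : finrank F ↥A = n) (h2 : 2 < n) :
    finrank F L % (n - 1) = 2 % (n - 1) := by
  classical
  have hAin : InX2 S A := inXk_iff.1 hA.1.1
  -- S is nonzero
  have hSbot : S ≠ ⊥ := by
    rintro rfl
    have h1 : A * (⊥ : Submodule F L) = ⊥ := Submodule.mul_bot A
    have h2' := hκmin A hA.1.1
    unfold deltaS at h2'
    rw [h1] at h2'
    rw [finrank_bot] at h2'
    rw [hn] at h2'
    omega
  have hS1 : 1 ≤ finrank F ↥S := by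
    rcases Nat.eq_zero_or_pos (finrank F ↥S) with h | h
    · exact absurd (Submodule.finrank_eq_zero.1 h) hSbot
    · omega
  set κ : ℕ := finrank F ↥S - 1 with hκdef
  have hκ1 : κ + 1 = finrank F ↥S := by omega
  -- κ is the min over 𝒳₂(S)
  have hminS : ∀ X : Submodule F L, InX2 S X → finrank F ↥X + κ ≤ finrank F ↥(X * S) := by
    intro X hX
    have h := hκmin X (inXk_iff.2 hX)
    unfold deltaS at h
    omega
  -- A is a fragment
  have hfragA : Frag S κ A := by
    obtain ⟨X₀, hX₀, hX₀eq⟩ := hκex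
    have h1 := hA.1.2 X₀ hX₀
    have h2' := hκmin A hA.1.1
    rw [hX₀eq] at h1
    unfold deltaS at h1 h2'
    exact ⟨hAin, by omega⟩
  -- translate A to contain 1
  have hAbot : A ≠ ⊥ := by
    intro h
    have h0 : finrank F ↥A = 0 := by rw [h]; exact finrank_bot F L
    omega
  obtain ⟨c₀, hc₀A, hc₀⟩ := Submodule.ne_bot_iff A |>.1 hAbot
  set A' : Submodule F L := Stmt10Aux.tr c₀⁻¹ A with hA'def
  have hinv0 : c₀⁻¹ ≠ 0 := inv_ne_zero hc₀
  have h1A' : (1:L) ∈ A' := mem_tr.2 ⟨c₀, hc₀A, inv_mul_cancel₀ hc₀⟩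
  have hfragA' : Frag S κ A' := hfragA.tr hinv0
  have hA'q : finrank F ↥A' = n := by rw [hA'def, finrank_tr _ hinv0, hn]
  -- every fragment of S has dimension ≥ n
  have hatomS : ∀ V : Submodule F L, Frag S κ V → n ≤ finrank F ↥V := by
    intro V hV
    have hfr : IsFragment 2 S V := by
      refine ⟨inXk_iff.2 hV.1, ?_⟩
      intro Y hY
      have h1 := hκmin Y hY
      unfold deltaS
      have h3 := hV.2
      have : (finrank F ↥(V * S) : ℤ) - finrank F ↥V = (finrank F ↥S : ℤ) - 1 := by
        rw [h3]; push_cast; omega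
      rw [this]
      exact h1
    have := hA.2 V hfr
    omega
  have PS : Pack S κ n A' :=
    ⟨hSbot, hminS, hfragA', hA'q, hatomS, h1A'⟩
  have coreS := fun {x} hx => PS.core hL (x := x) hx
  -- dim S ≥ 2
  have hS2 : 2 ≤ finrank F ↥S := by
    by_contra hcon
    push_neg at hcon
    have hSeq : finrank F ↥S = 1 := by omega
    have hκ0 : κ = 0 := by omega
    obtain ⟨s, hsS, hs0⟩ := Submodule.ne_bot_iff S |>.1 hSbot
    have hSspan : span F {s} = S := by
      apply Submodule.eq_of_le_of_finrank_le (span_le.2 (Set.singleton_subset_iff.2 hsS))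
      rw [finrank_span_singleton hs0]
      omega
    obtain ⟨a₂, ha₂A, ha₂⟩ := exists_not_mem_span_one (X := A') (by omega)
    set X : Submodule F L := span F {(1:L)} ⊔ span F {a₂} with hXdef
    have hinfbot : span F {(1:L)} ⊓ span F {a₂} = ⊥ := by
      by_contra hne
      obtain ⟨z, ⟨hz1, hz2⟩, hz0⟩ := Submodule.ne_bot_iff _ |>.1 hne
      obtain ⟨r, hr⟩ := Submodule.mem_span_singleton.1 hz1
      obtain ⟨t, ht⟩ := Submodule.mem_span_singleton.1 hz2
      have ht0 : t ≠ 0 := by rintro rfl; simp at ht; exact hz0 ht.symm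
      apply ha₂
      have : a₂ = t⁻¹ • z := by rw [← ht, smul_smul, inv_mul_cancel₀ ht0, one_smul]
      rw [this, ← hr]
      exact Submodule.smul_mem _ _ (Submodule.smul_mem _ _ (Submodule.mem_span_singleton_self _))
    have hX2 : finrank F ↥X = 2 := by
      have h := Submodule.finrank_sup_add_finrank_inf_eq (span F {(1:L)}) (span F {a₂})
      rw [hinfbot, finrank_bot, finrank_span_singleton (one_ne_zero),
        finrank_span_singleton (by rintro rfl; exact ha₂ (zero_mem _))] at h
      rw [hXdef]
      omega
    have hXA' : X ≤ A' := sup_le (span_le.2 (Set.singleton_subset_iff.2 h1A'))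
      (span_le.2 (Set.singleton_subset_iff.2 ha₂A))
    have hXS_le : finrank F ↥(X * S) ≤ finrank F ↥(A' * S) :=
      Submodule.finrank_mono (mul_le_mul' hXA' le_rfl)
    have hA'Sup : finrank F ↥(A' * S) + 2 ≤ finrank F L := hfragA'.1.2
    have hXSeq : finrank F ↥(X * S) = 2 := by
      have h1 : X * S = Stmt10Aux.tr s X := by
        rw [← hSspan, Submodule.mul_comm]
        rfl
      rw [h1, finrank_tr s hs0, hX2]
    have hXfrag : Frag S κ X := ⟨⟨by omega, by omega⟩, by omega⟩
    have := hatomS X hXfrag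
    omega
  -- ======== T-side (T = A') ========
  have hA'ne : A' ≠ ⊥ := by
    intro h
    rw [h] at h1A'
    exact one_ne_zero ((Submodule.mem_bot F).1 h1A')
  have hA'S : finrank F ↥(A' * S) = n + κ := by rw [hfragA'.2, hA'q]
  have hSA'comm : S * A' = A' * S := Submodule.mul_comm S A'
  have hSin : InX2 A' S := by
    refine ⟨hS2, ?_⟩
    rw [hSA'comm]
    exact hfragA'.1.2
  have hSval : finrank F ↥(S * A') = finrank F ↥S + (n - 1) := by
    rw [hSA'comm, hA'S]
    omega
  set Kset : Set ℕ := {j | ∃ X : Submodule F L, InX2 A' X ∧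
    finrank F ↥(X * A') = finrank F ↥X + j} with hKdef
  have hn1mem : (n - 1) ∈ Kset := ⟨S, hSin, hSval⟩
  set κT : ℕ := sInf Kset with hκTdef
  obtain ⟨X₁, hX₁in, hX₁eq⟩ := Nat.sInf_mem (⟨n - 1, hn1mem⟩ : Kset.Nonempty)
  have hminT : ∀ X : Submodule F L, InX2 A' X → finrank F ↥X + κT ≤ finrank F ↥(X * A') := by
    intro X hX
    have h0 : finrank F ↥X ≤ finrank F ↥(X * A') := finrank_le_finrank_mul hA'ne X
    have hmem : (finrank F ↥(X * A') - finrank F ↥X) ∈ Kset := ⟨X, hX, by omega⟩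
    have := Nat.sInf_le hmem
    omega
  have hκT_le : κT ≤ n - 1 := Nat.sInf_le hn1mem
  have hX₁frag : Frag A' κT X₁ := ⟨hX₁in, hX₁eq⟩
  set Qset : Set ℕ := {j | ∃ V : Submodule F L, Frag A' κT V ∧ finrank F ↥V = j} with hQdef
  obtain ⟨B₀, hB₀frag, hB₀q⟩ := Nat.sInf_mem (⟨_, X₁, hX₁frag, rfl⟩ : Qset.Nonempty)
  set q : ℕ := sInf Qset with hqdef
  have hatomT : ∀ V : Submodule F L, Frag A' κT V → q ≤ finrank F ↥V := by
    intro V hV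
    exact Nat.sInf_le ⟨V, hV, rfl⟩
  have hB₀bot : B₀ ≠ ⊥ := by
    intro h
    have h0 : finrank F ↥B₀ = 0 := by rw [h]; exact finrank_bot F L
    have := hB₀frag.1.1
    omega
  obtain ⟨c₁, hc₁B, hc₁⟩ := Submodule.ne_bot_iff B₀ |>.1 hB₀bot
  have hinv1 : c₁⁻¹ ≠ 0 := inv_ne_zero hc₁
  set B : Submodule F L := Stmt10Aux.tr c₁⁻¹ B₀ with hBdef
  have h1B : (1:L) ∈ B := mem_tr.2 ⟨c₁, hc₁B, inv_mul_cancel₀ hc₁⟩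
  have hfragB : Frag A' κT B := hB₀frag.tr hinv1
  have hBq : finrank F ↥B = q := by rw [hBdef, finrank_tr _ hinv1, hB₀q]
  have PT : Pack A' κT q B := ⟨hA'ne, hminT, hfragB, hBq, hatomT, h1B⟩
  have hq2 : 2 ≤ q := PT.hq2
  -- Phase 3 : n ≤ q
  have hqn : n ≤ q := by
    by_contra hcon
    push_neg at hcon
    obtain ⟨b, hbB, hb1⟩ := exists_not_mem_span_one (X := B) (by omega)
    have hBA' : finrank F ↥(B * A') = q + κT := by rw [hfragB.2, hBq]
    have htrble : Stmt10Aux.tr b A' ≤ B * A' :=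
      mul_le_mul' (span_le.2 (Set.singleton_subset_iff.2 hbB)) le_rfl
    have hA'le : A' ≤ B * A' := by
      have h := le_mul_of_one_mem h1B A'
      rwa [Submodule.mul_comm A' B] at h
    have hb0 : b ≠ 0 := by rintro rfl; exact hb1 (zero_mem _)
    have hsuple : finrank F ↥(A' ⊔ Stmt10Aux.tr b A') ≤ q + κT := by
      rw [← hBA']
      exact Submodule.finrank_mono (sup_le hA'le htrble)
    have hsupinf := Submodule.finrank_sup_add_finrank_inf_eq A' (Stmt10Aux.tr b A')
    rw [finrank_tr b hb0, hA'q] at hsupinf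
    have hcore := coreS hb1
    omega
  -- Phase 5 : q = n and κT = n - 1
  obtain ⟨b', hb'A, hb'1⟩ := exists_not_mem_span_one (X := A') (by omega)
  have hb'0 : b' ≠ 0 := by rintro rfl; exact hb'1 (zero_mem _)
  have hBA' : finrank F ↥(B * A') = q + κT := by rw [hfragB.2, hBq]
  have hBle : B ≤ B * A' := le_mul_of_one_mem h1A' B
  have htrB : Stmt10Aux.tr b' B ≤ B * A' := by
    have h : span F {b'} * B ≤ A' * B :=
      mul_le_mul' (span_le.2 (Set.singleton_subset_iff.2 hb'A)) le_rfl
    rwa [Submodule.mul_comm A' B] at h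
  have hsuple : finrank F ↥(B ⊔ Stmt10Aux.tr b' B) ≤ q + κT := by
    rw [← hBA']
    exact Submodule.finrank_mono (sup_le hBle htrB)
  have hsupinf := Submodule.finrank_sup_add_finrank_inf_eq B (Stmt10Aux.tr b' B)
  rw [finrank_tr b' hb'0, hBq] at hsupinf
  have hcore := PT.core hL hb'1
  have hqeq : q = n := by omega
  have hκTeq : κT = n - 1 := by omega
  -- Master argument
  have hcritT : κT + 1 = finrank F ↥A' := by rw [hA'q]; omega
  obtain ⟨m, hm⟩ := PT.master hL hcritT (finrank F L) B hfragB (by omega)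
  rw [hBq] at hm
  -- conclude
  set u : ℕ := n - 1 with hudef
  have hu : u + 1 = n := by omega
  rw [show q - 1 = u by omega] at hm
  have hfinal : finrank F L = 2 + (m + 3) * u := by
    have hexp : (m + 3) * u = m * u + 3 * u := by ring
    omega
  rw [hfinal]
  exact Nat.add_mul_mod_self_right 2 (m+3) u
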